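/- With the hypotheses of the previous statement, the induced map g : g₀ → M (where g(φ(e)) = γ(e^[p]) − (γ(e))^[p]) is p-semilinear and takes values in the invariants M^g = {m ∈ M : x·m = 0 for all x ∈ g}. -/

import Mathlib

open TensorProduct

/-- The linear map extracting the `n`-th coefficient of an element of `k[λ] ⊗ g`. -/
noncomputable def jacobsonCoeff (k : Type*) [CommRing k] (g : Type*) [AddCommGroup g]
    [Module k g] (n : ℕ) : (Polynomial k ⊗[k] g) →ₗ[k] g :=
  (TensorProduct.lid k g).toLinearMap.comp (LinearMap.rTensor g (Polynomial.lcoeff k n))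

/-- `jacobsonS k p g x y i` is the element `sᵢ(x,y)` of `g` determined by the requirement
that `i·sᵢ(x,y)` is the coefficient of `λ^{i-1}` in `(ad(λx+y))^{p-1}(x)`, computed in the
base change `k[λ] ⊗ g`. -/
noncomputable def jacobsonS (k : Type*) [Field k] (p : ℕ) (g : Type*) [LieRing g]
    [LieAlgebra k g] (x y : g) (i : ℕ) : g :=
  ((i : k)⁻¹) • jacobsonCoeff k g (i - 1)
    (((LieAlgebra.ad (Polynomial k) (Polynomial k ⊗[k] g)
        (Polynomial.X ⊗ₜ[k] x + 1 ⊗ₜ[k] y)) ^ (p - 1)) (1 ⊗ₜ[k] x))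

/-- `P` is a `p`-operation on the Lie algebra `g` over `k`:
`(c•x)^[p] = c^p • x^[p]`, `ad(x^[p]) = (ad x)^p`, and the Jacobson formula
`(x+y)^[p] = x^[p] + y^[p] + ∑_{i=1}^{p-1} sᵢ(x,y)`. -/
def IsPOperation (k : Type*) [Field k] (p : ℕ) (g : Type*) [LieRing g] [LieAlgebra k g]
    (P : g → g) : Prop :=
  (∀ (c : k) (x : g), P (c • x) = c ^ p • P x) ∧
  (∀ x y : g, ⁅P x, y⁆ = ((LieAlgebra.ad k g x) ^ p) y) ∧
  (∀ x y : g, P (x + y) = P x + P y + ∑ i ∈ Finset.Icc 1 (p - 1), jacobsonS k p g x y i)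


section Aux

variable {k : Type*} [Field k] {L L' : Type*} [LieRing L] [LieAlgebra k L]
    [LieRing L'] [LieAlgebra k L']

lemma baseChange_bracket (f : L →ₗ⁅k⁆ L') (a b : Polynomial k ⊗[k] L) :
    f.toLinearMap.baseChange (Polynomial k) ⁅a, b⁆ =
      ⁅f.toLinearMap.baseChange (Polynomial k) a, f.toLinearMap.baseChange (Polynomial k) b⁆ := by
  induction a using TensorProduct.induction_on with
  | zero =>
      rw [zero_lie (L := Polynomial k ⊗[k] L) (M := Polynomial k ⊗[k] L) b, map_zero]
      exact (zero_lie (L := Polynomial k ⊗[k] L') (M := Polynomial k ⊗[k] L') _).symm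
  | tmul p x =>
    induction b using TensorProduct.induction_on with
    | zero =>
        rw [lie_zero (L := Polynomial k ⊗[k] L) (M := Polynomial k ⊗[k] L) (p ⊗ₜ[k] x), map_zero]
        exact (lie_zero (L := Polynomial k ⊗[k] L') (M := Polynomial k ⊗[k] L') _).symm
    | tmul q y =>
        have h1 : ⁅p ⊗ₜ[k] x, q ⊗ₜ[k] y⁆ = (p * q) ⊗ₜ[k] ⁅x, y⁆ :=
          LieAlgebra.ExtendScalars.bracket_tmul k (Polynomial k) L L p q x y
        have h2 : ⁅p ⊗ₜ[k] (f x), q ⊗ₜ[k] (f y)⁆ = (p * q) ⊗ₜ[k] ⁅f x, f y⁆ :=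
          LieAlgebra.ExtendScalars.bracket_tmul k (Polynomial k) L' L' p q (f x) (f y)
        rw [h1, LinearMap.baseChange_tmul, LinearMap.baseChange_tmul, LinearMap.baseChange_tmul]
        exact (congrArg (fun z => (p * q) ⊗ₜ[k] z) (f.map_lie x y)).trans h2.symm
    | add b1 b2 ih1 ih2 =>
        rw [lie_add (L := Polynomial k ⊗[k] L) (M := Polynomial k ⊗[k] L), map_add, ih1, ih2,
          map_add]
        exact (lie_add (L := Polynomial k ⊗[k] L') (M := Polynomial k ⊗[k] L') _ _ _).symm
  | add a1 a2 ih1 ih2 =>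
      rw [add_lie (L := Polynomial k ⊗[k] L) (M := Polynomial k ⊗[k] L), map_add, ih1, ih2,
        map_add]
      exact (add_lie (L := Polynomial k ⊗[k] L') (M := Polynomial k ⊗[k] L') _ _ _).symm

lemma baseChange_adpow (f : L →ₗ⁅k⁆ L') (a b : Polynomial k ⊗[k] L) (n : ℕ) :
    f.toLinearMap.baseChange (Polynomial k)
        (((LieAlgebra.ad (Polynomial k) (Polynomial k ⊗[k] L) a) ^ n) b) =
      ((LieAlgebra.ad (Polynomial k) (Polynomial k ⊗[k] L')
        (f.toLinearMap.baseChange (Polynomial k) a)) ^ n)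
        (f.toLinearMap.baseChange (Polynomial k) b) := by
  induction n with
  | zero => simp
  | succ n ih =>
      rw [pow_succ', pow_succ', Module.End.mul_apply, Module.End.mul_apply,
        LieAlgebra.ad_apply, LieAlgebra.ad_apply, baseChange_bracket, ih]

lemma coeff_naturality (f : L →ₗ⁅k⁆ L') (n : ℕ) (t : Polynomial k ⊗[k] L) :
    jacobsonCoeff k L' n (f.toLinearMap.baseChange (Polynomial k) t) =
      f (jacobsonCoeff k L n t) := by
  induction t using TensorProduct.induction_on with
  | zero => simp
  | tmul p x => simp [jacobsonCoeff, LinearMap.rTensor_tmul]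
  | add t1 t2 ih1 ih2 => simp only [map_add, map_add, ih1, ih2]

lemma jacobsonS_naturality (p : ℕ) (f : L →ₗ⁅k⁆ L') (x y : L) (i : ℕ) :
    f (jacobsonS k p L x y i) = jacobsonS k p L' (f x) (f y) i := by
  unfold jacobsonS
  rw [map_smul, ← coeff_naturality, baseChange_adpow]
  have ha : f.toLinearMap.baseChange (Polynomial k)
      (Polynomial.X ⊗ₜ[k] x + 1 ⊗ₜ[k] y) = Polynomial.X ⊗ₜ[k] (f x) + 1 ⊗ₜ[k] (f y) := by
    rw [map_add, LinearMap.baseChange_tmul, LinearMap.baseChange_tmul]; rfl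
  have hb : f.toLinearMap.baseChange (Polynomial k) ((1 : Polynomial k) ⊗ₜ[k] x)
      = (1 : Polynomial k) ⊗ₜ[k] (f x) := by rw [LinearMap.baseChange_tmul]; rfl
  rw [ha, hb]

lemma ad_pow_hom (f : L →ₗ⁅k⁆ L') (e x : L) (n : ℕ) :
    f (((LieAlgebra.ad k L e) ^ n) x) = ((LieAlgebra.ad k L' (f e)) ^ n) (f x) := by
  induction n with
  | zero => simp
  | succ n ih =>
      rw [pow_succ', pow_succ', Module.End.mul_apply, Module.End.mul_apply,
        LieAlgebra.ad_apply, LieAlgebra.ad_apply, LieHom.map_lie, ih]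

end Aux

/-- With the hypotheses of the previous statement, the induced map `G : g → M`
(`ι'(G(φ(e))) = γ(e^[p]) - (γ(e))^[p]`) is `p`-semilinear and takes values in the
invariants `M^g = {m : x·m = 0 for all x}` (the `g`-action on `M` being induced by
the adjoint action of the ambient algebra). -/
theorem stmt14 (k : Type*) [Field k] (p : ℕ) [Fact p.Prime] (hp : 2 < p) [CharP k p]
    (g : Type*) [LieRing g] [LieAlgebra k g] (P : g → g) (hP : IsPOperation k p g P)
    (E : Type*) [LieRing E] [LieAlgebra k E] (PE : E → E) (hPE : IsPOperation k p E PE)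
    (E' : Type*) [LieRing E'] [LieAlgebra k E'] (PE' : E' → E') (hPE' : IsPOperation k p E' PE')
    (M : Type*) [AddCommGroup M] [Module k M] (PM : M → M)
    (ι : M →ₗ[k] E) (hinj : Function.Injective ι)
    (φ : E →ₗ⁅k⁆ g) (hsurj : Function.Surjective φ)
    (hker : ∀ e : E, φ e = 0 ↔ e ∈ Set.range ι)
    (habel : ∀ m m' : M, ⁅ι m, ι m'⁆ = 0)
    (hideal : ∀ (e : E) (m : M), ⁅e, ι m⁆ ∈ Set.range ι)
    (hres : ∀ m : M, PE (ι m) = ι (PM m))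
    (hPφ : ∀ e : E, φ (PE e) = P (φ e))
    (ι' : M →ₗ[k] E') (hinj' : Function.Injective ι')
    (φ' : E' →ₗ⁅k⁆ g) (hsurj' : Function.Surjective φ')
    (hker' : ∀ e : E', φ' e = 0 ↔ e ∈ Set.range ι')
    (habel' : ∀ m m' : M, ⁅ι' m, ι' m'⁆ = 0)
    (hideal' : ∀ (e : E') (m : M), ⁅e, ι' m⁆ ∈ Set.range ι')
    (hres' : ∀ m : M, PE' (ι' m) = ι' (PM m))
    (hPφ' : ∀ e : E', φ' (PE' e) = P (φ' e))
    (γ : E →ₗ⁅k⁆ E') (hbij : Function.Bijective γ)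
    (hfix : ∀ m : M, γ (ι m) = ι' m) (hcom : ∀ e : E, φ' (γ e) = φ e)
    -- the map `G` induced by `e ↦ γ(e^[p]) - (γ(e))^[p]`
    (G : g → M) (hG : ∀ e : E, ι' (G (φ e)) = γ (PE e) - PE' (γ e)) :
    (∀ (c : k) (x y : g), G (c • x + y) = c ^ p • G x + G y) ∧
      (∀ (e' : E') (x : g), ⁅e', ι' (G x)⁆ = 0) := by
  constructor
  · intro c x y
    obtain ⟨e, he⟩ := hsurj x
    obtain ⟨f0, hf0⟩ := hsurj y
    apply hinj'
    have hγadd : γ (c • e + f0) = c • γ e + γ f0 := by rw [map_add, map_smul]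
    have hsum : γ (∑ i ∈ Finset.Icc 1 (p - 1), jacobsonS k p E (c • e) f0 i) =
        ∑ i ∈ Finset.Icc 1 (p - 1), jacobsonS k p E' (c • γ e) (γ f0) i := by
      have h0 : γ (∑ i ∈ Finset.Icc 1 (p - 1), jacobsonS k p E (c • e) f0 i) =
          ∑ i ∈ Finset.Icc 1 (p - 1), γ (jacobsonS k p E (c • e) f0 i) :=
        map_sum γ.toLinearMap _ _
      rw [h0]
      refine Finset.sum_congr rfl fun i _ => ?_
      rw [jacobsonS_naturality, map_smul]
    have h1 : c • x + y = φ (c • e + f0) := by rw [map_add, map_smul, he, hf0]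
    rw [h1, hG, LinearMap.map_add, LinearMap.map_smul, ← he, ← hf0, hG, hG,
      hγadd, hPE.2.2 (c • e) f0, hPE'.2.2 (c • γ e) (γ f0),
      map_add, map_add, hsum, hPE.1 c e, hPE'.1 c (γ e), map_smul,
      smul_sub]
    abel
  · intro e' x
    obtain ⟨e, he⟩ := hsurj x
    obtain ⟨f0, hf0⟩ := hbij.2 e'
    rw [← he, hG, ← hf0, lie_sub, ← LieHom.map_lie]
    rw [sub_eq_zero]
    have h1 : ⁅f0, PE e⁆ = -((LieAlgebra.ad k E e ^ p) f0) := by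
      rw [← lie_skew, hPE.2.1]
    have h2 : ⁅γ f0, PE' (γ e)⁆ = -((LieAlgebra.ad k E' (γ e) ^ p) (γ f0)) := by
      rw [← lie_skew, hPE'.2.1]
    rw [h1, h2, map_neg, ad_pow_hom]
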